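/- Vertex-restricted 2-approximate simplification exists: let (X,ρ) be a metric space, let p ∈ [1,∞), let ℓ ≥ 2 be an integer, let π = (x₁,…,x_m) ∈ X^m be a point sequence, and let P = {x₁,…,x_m} be its set of vertices. Then the minimum of dtw_p(π,σ) over all point sequences σ of complexity at most ℓ whose vertices all lie in P is at most 2 times the minimum of dtw_p(π,π') over all point sequences π' ∈ X^{≤ℓ}; that is, some point sequence over the vertices of π is a (2,ℓ)-simplification of π under dtw_p. -/

import Mathlib

open scoped BigOperators

/-- An `(m₁, m₂)`-warping (with 0-based indices): a sequence of index pairs starting at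
`(0,0)`, ending at `(m₁-1, m₂-1)`, whose consecutive increments lie in
`{(0,1), (1,0), (1,1)}`. -/
def IsWarping (m₁ m₂ : ℕ) (W : List (ℕ × ℕ)) : Prop :=
  W ≠ [] ∧ W.head? = some (0, 0) ∧ W.getLast? = some (m₁ - 1, m₂ - 1) ∧
    ∀ k, k + 1 < W.length →
      W.getD (k + 1) (0, 0) = ((W.getD k (0, 0)).1, (W.getD k (0, 0)).2 + 1) ∨
      W.getD (k + 1) (0, 0) = ((W.getD k (0, 0)).1 + 1, (W.getD k (0, 0)).2) ∨
      W.getD (k + 1) (0, 0) = ((W.getD k (0, 0)).1 + 1, (W.getD k (0, 0)).2 + 1)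

/-- The cost `Σ_{(i,j) ∈ W} ρ(σ_i, τ_j)^p` of a warping `W`. -/
noncomputable def warpCost {X : Type*} [MetricSpace X] [Inhabited X]
    (p : ℝ) (σ τ : List X) (W : List (ℕ × ℕ)) : ℝ :=
  (W.map fun ij => dist (σ.getD ij.1 default) (τ.getD ij.2 default) ^ p).sum

/-- The `p`-dynamic time warping distance between two point sequences. -/
noncomputable def dtw {X : Type*} [MetricSpace X] [Inhabited X] (p : ℝ) (σ τ : List X) : ℝ :=
  sInf { c : ℝ | ∃ W, IsWarping σ.length τ.length W ∧ c = warpCost p σ τ W ^ (1 / p) }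

/-- `cost_p^q(T, c) = Σ_{τ ∈ T} dtw_p(c, τ)^q`. -/
noncomputable def dtwCost {X : Type*} [MetricSpace X] [Inhabited X]
    (p q : ℝ) (T : Finset (List X)) (c : List X) : ℝ :=
  ∑ τ ∈ T, dtw p c τ ^ q

/-- `σ` is a point sequence of complexity at most `ℓ`, i.e. `σ ∈ X^{≤ℓ}`. -/
def SeqLE {X : Type*} (ℓ : ℕ) (σ : List X) : Prop := 2 ≤ σ.length ∧ σ.length ≤ ℓ

lemma warping_bound {m₁ m₂ : ℕ} {W : List (ℕ × ℕ)} (h : IsWarping m₁ m₂ W) :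
    ∀ q ∈ W, q.1 ≤ m₁ - 1 ∧ q.2 ≤ m₂ - 1 := by
  obtain ⟨hne, hhead, hlast, hstep⟩ := h
  have hn0 : 0 < W.length := List.length_pos_iff.2 hne
  have mono : ∀ d k, k + d < W.length →
      (W.getD k (0,0)).1 ≤ (W.getD (k+d) (0,0)).1 ∧
      (W.getD k (0,0)).2 ≤ (W.getD (k+d) (0,0)).2 := by
    intro d
    induction d with
    | zero => intro k _; exact ⟨le_rfl, le_rfl⟩
    | succ d ih =>
      intro k hk
      have h1 := ih k (by omega)
      have h2 := hstep (k + d) (by omega)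
      have he : k + (d+1) = (k+d)+1 := by omega
      rw [he]
      rcases h2 with h2 | h2 | h2 <;> rw [h2]
      · exact ⟨h1.1, h1.2.trans (Nat.le_succ _)⟩
      · exact ⟨h1.1.trans (Nat.le_succ _), h1.2⟩
      · exact ⟨h1.1.trans (Nat.le_succ _), h1.2.trans (Nat.le_succ _)⟩
  intro q hq
  obtain ⟨k, hk, hkq⟩ := List.mem_iff_getElem.1 hq
  have hgd : W.getD k (0,0) = q := by rw [List.getD_eq_getElem _ _ hk, hkq]
  have hlastv : W.getD (W.length - 1) (0,0) = (m₁ - 1, m₂ - 1) := by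
    rw [List.getD_eq_getElem _ _ (by omega)]
    rw [List.getLast?_eq_getLast hne] at hlast
    have h3 := List.getLast_eq_getElem hne
    injection hlast with h'
    rw [← h3]; exact h'
  have hm := mono (W.length - 1 - k) k (by omega)
  rw [show k + (W.length-1-k) = W.length-1 from by omega, hlastv, hgd] at hm
  exact hm

lemma warpCost_nonneg {X : Type*} [MetricSpace X] [Inhabited X]
    (p : ℝ) (σ τ : List X) (W : List (ℕ × ℕ)) : 0 ≤ warpCost p σ τ W := by
  apply List.sum_nonneg
  intro x hx
  simp only [List.mem_map] at hx
  obtain ⟨q, _, rfl⟩ := hx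
  exact Real.rpow_nonneg dist_nonneg p

lemma exists_nn {X : Type*} [MetricSpace X] (π : List X) (hne : π ≠ []) :
    ∃ nn : X → X, ∀ y, nn y ∈ π ∧ ∀ x ∈ π, dist y (nn y) ≤ dist y x := by
  have h : ∀ y : X, ∃ z, z ∈ π ∧ ∀ x ∈ π, dist y z ≤ dist y x := by
    intro y
    obtain ⟨z, hz, hmin⟩ := Set.exists_min_image {x | x ∈ π} (dist y)
      π.finite_toSet ⟨π.head hne, List.head_mem hne⟩
    exact ⟨z, hz, hmin⟩
  choose nn h1 h2 using h
  exact ⟨nn, fun y => ⟨h1 y, h2 y⟩⟩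

lemma dtw_snap_le {X : Type*} [MetricSpace X] [Inhabited X]
    (p : ℝ) (hp : 1 ≤ p) (π π' : List X) (hπ : π ≠ [])
    (nn : X → X) (hnn : ∀ y, nn y ∈ π ∧ ∀ x ∈ π, dist y (nn y) ≤ dist y x) :
    dtw p π (π'.map nn) ≤ 2 * dtw p π π' := by
  have hp0 : 0 < p := by linarith
  have hπ0 : 0 < π.length := List.length_pos_iff.2 hπ
  have key : ∀ W, IsWarping π.length π'.length W →
      warpCost p π (π'.map nn) W ≤ 2 ^ p * warpCost p π π' W := by
    intro W hW
    unfold warpCost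
    rw [← List.sum_map_mul_left]
    apply List.sum_le_sum
    intro q hq
    have hq1 : q.1 < π.length := by
      have := (warping_bound hW q hq).1; omega
    set x := π.getD q.1 default with hx
    have hxmem : x ∈ π := by
      rw [hx, List.getD_eq_getElem _ _ hq1]; exact List.getElem_mem _
    have hd : dist x ((π'.map nn).getD q.2 default) ≤ 2 * dist x (π'.getD q.2 default) := by
      by_cases hj : q.2 < π'.length
      · have hσ : (π'.map nn).getD q.2 default = nn (π'.getD q.2 default) := by
          rw [List.getD_eq_getElem _ _ (by simpa using hj), List.getElem_map,
            List.getD_eq_getElem _ _ hj]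
        rw [hσ]
        set y := π'.getD q.2 default
        calc dist x (nn y) ≤ dist x y + dist y (nn y) := dist_triangle _ _ _
          _ ≤ dist x y + dist y x := add_le_add_right ((hnn y).2 x hxmem) _
          _ = 2 * dist x y := by rw [dist_comm y x]; ring
      · push_neg at hj
        rw [List.getD_eq_default _ _ (by simpa using hj), List.getD_eq_default _ _ hj]
        linarith [dist_nonneg (x := x) (y := (default : X))]
    calc dist x ((π'.map nn).getD q.2 default) ^ p
        ≤ (2 * dist x (π'.getD q.2 default)) ^ p :=
          Real.rpow_le_rpow dist_nonneg hd (by linarith)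
      _ = 2 ^ p * dist x (π'.getD q.2 default) ^ p :=
          Real.mul_rpow (by norm_num) dist_nonneg
  simp only [dtw, List.length_map]
  set A := { c : ℝ | ∃ W, IsWarping π.length π'.length W ∧ c = warpCost p π π' W ^ (1 / p) }
    with hA
  set B := { c : ℝ | ∃ W, IsWarping π.length π'.length W ∧
      c = warpCost p π (π'.map nn) W ^ (1 / p) } with hB
  have hBbdd : BddBelow B := by
    refine ⟨0, fun b hb => ?_⟩
    obtain ⟨W, _, rfl⟩ := hb
    exact Real.rpow_nonneg (warpCost_nonneg _ _ _ _) _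
  have hstep : ∀ a ∈ A, sInf B ≤ 2 * a := by
    intro a ha
    obtain ⟨W, hW, rfl⟩ := ha
    have hbB : warpCost p π (π'.map nn) W ^ (1/p) ∈ B := ⟨W, hW, rfl⟩
    have h1 : sInf B ≤ warpCost p π (π'.map nn) W ^ (1/p) := csInf_le hBbdd hbB
    have h2 : warpCost p π (π'.map nn) W ^ (1/p) ≤
        (2 ^ p * warpCost p π π' W) ^ (1/p) :=
      Real.rpow_le_rpow (warpCost_nonneg _ _ _ _) (key W hW) (by positivity)
    have h3 : (2 ^ p * warpCost p π π' W) ^ (1/p)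
        = 2 * warpCost p π π' W ^ (1/p) := by
      rw [Real.mul_rpow (by positivity) (warpCost_nonneg _ _ _ _),
        ← Real.rpow_mul (by norm_num : (0:ℝ) ≤ 2),
        show p * (1/p) = 1 from by field_simp, Real.rpow_one]
    linarith
  by_cases hAne : A.Nonempty
  · have h4 : sInf B / 2 ≤ sInf A := by
      apply le_csInf hAne
      intro a ha
      linarith [hstep a ha]
    linarith
  · have hAe : A = ∅ := Set.not_nonempty_iff_eq_empty.1 hAne
    have hBe : B = ∅ := by
      rw [Set.eq_empty_iff_forall_notMem]
      rintro b ⟨W, hW, _⟩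
      exact hAne ⟨warpCost p π π' W ^ (1/p), W, hW, rfl⟩
    rw [hAe, hBe, Real.sInf_empty]
    norm_num

/-- **Vertex-restricted 2-approximate simplification exists**
(Lemma `lemma:simplificationcorrectness2`): for every point sequence `π ∈ X^m` there is a
point sequence `σ` of complexity at most `ℓ`, all of whose vertices are vertices of `π`,
with `dtw_p(π,σ) ≤ 2 · dtw_p(π,π')` for every `π' ∈ X^{≤ℓ}`; i.e. some point sequence over
the vertices of `π` is a `(2,ℓ)`-simplification of `π` under `dtw_p`. -/
theorem vertex_restricted_two_approx_simplification {X : Type*} [MetricSpace X] [Inhabited X]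
    (p : ℝ) (hp : 1 ≤ p) (ℓ : ℕ) (hℓ : 2 ≤ ℓ)
    (π : List X) (hπ : 2 ≤ π.length) :
    ∃ σ : List X, SeqLE ℓ σ ∧ (∀ v ∈ σ, v ∈ π) ∧
      ∀ π' : List X, SeqLE ℓ π' → dtw p π σ ≤ 2 * dtw p π π' := by
  have hπne : π ≠ [] := by intro h; rw [h] at hπ; simp at hπ
  obtain ⟨nn, hnn⟩ := exists_nn π hπne
  set S : Set (List X) := {σ | SeqLE ℓ σ ∧ ∀ v ∈ σ, v ∈ π} with hS
  haveI : Finite {x // x ∈ π} := π.finite_toSet.to_subtype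
  have hSfin : S.Finite := by
    have hsub : S ⊆ (fun l : List {x // x ∈ π} => l.map Subtype.val) ''
        {l | l.length ≤ ℓ} := by
      intro σ hσ
      refine ⟨σ.attach.map (fun v => ⟨v.1, hσ.2 v.1 v.2⟩), by simpa using hσ.1.2, ?_⟩
      simp [List.map_map, Function.comp]
    exact Set.Finite.subset (Set.Finite.image _ (List.finite_length_le _ ℓ)) hsub
  have hSne : S.Nonempty := by
    refine ⟨[π.head hπne, π.head hπne], ⟨⟨by simp, by simpa using hℓ⟩, ?_⟩⟩
    intro v hv
    simp only [List.mem_cons, List.not_mem_nil, or_false] at hv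
    rcases hv with rfl | rfl <;> exact List.head_mem hπne
  obtain ⟨σ, hσS, hσmin⟩ := Set.exists_min_image S (dtw p π) hSfin hSne
  refine ⟨σ, hσS.1, hσS.2, ?_⟩
  intro π' hπ'
  have hmem : (π'.map nn) ∈ S := by
    refine ⟨⟨by simpa using hπ'.1, by simpa using hπ'.2⟩, ?_⟩
    intro v hv
    obtain ⟨y, _, rfl⟩ := List.mem_map.1 hv
    exact (hnn y).1
  exact (hσmin _ hmem).trans (dtw_snap_le p hp π π' hπne nn hnn)
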